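/- arXiv:1806.04742 — 4 statements merged into one kernel-verified Lean document; each statement's English description precedes it below -/
import Mathlib

section
/- The optimal bottleneck power p* equals the power requirement of some edge of G, where the power requirement of an edge (u,v) is w(u,v)/2 if both endpoints lie in V and w(u,v) if one endpoint lies in {s,t}. Consequently, the optimal value lies in a finite set of at most |E| candidate values. -/
open Finset

variable {α : Type*}

/-- The graph of surviving edges: an edge of `G` survives the power assignment `p`
iff `p u + p v < w (u,v)`; edges with `p u + p v ≥ w` are removed. -/
def cutGraph (G : SimpleGraph α) (w : Sym2 α → ℝ) (p : α → ℝ) : SimpleGraph α where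
  Adj u v := G.Adj u v ∧ p u + p v < w s(u, v)
  symm := by
    constructor
    intro u v h
    refine ⟨h.1.symm, ?_⟩
    rw [Sym2.eq_swap]
    linarith [h.2]
  loopless := ⟨fun u h => G.irrefl h.1⟩

/-- MSPEC feasibility: `p s = p t = 0`, powers nonnegative, and removing the
edges `(u,v)` with `p u + p v ≥ w (u,v)` disconnects `s` from `t`. -/
def Feasible (G : SimpleGraph α) (w : Sym2 α → ℝ) (s t : α) (p : α → ℝ) : Prop :=
  p s = 0 ∧ p t = 0 ∧ (∀ v, 0 ≤ p v) ∧ ¬ (cutGraph G w p).Reachable s t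

/-- The uniform (bottleneck) power assignment: power `q` on every vertex of `V`,
and `0` on `s` and `t`. -/
def uniformP [DecidableEq α] (s t : α) (q : ℝ) : α → ℝ :=
  fun v => if v = s ∨ v = t then 0 else q

/-- Deleting a vertex set `K` from a graph (all edges incident to `K` disappear). -/
def delV (H : SimpleGraph α) (K : Set α) : SimpleGraph α where
  Adj u v := H.Adj u v ∧ u ∉ K ∧ v ∉ K
  symm := ⟨fun u v h => ⟨h.1.symm, h.2.2, h.2.1⟩⟩
  loopless := ⟨fun u h => H.irrefl h.1⟩

/-- `K` is an `s`-`t` vertex cut of `H`. -/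
def IsCut (H : SimpleGraph α) (s t : α) (K : Set α) : Prop :=
  s ∉ K ∧ t ∉ K ∧ ¬ (delV H K).Reachable s t

/-- The power represented by a copy-vertex of the discretized graph:
copy `(v, i)` represents power `i * al` (and copies of `s`, `t` have power `0`). -/
def copyPow [DecidableEq α] (s t : α) (al : ℝ) (a : α × ℕ) : ℝ :=
  if a.1 = s ∨ a.1 = t then 0 else a.2 * al

/-- Validity of a copy-vertex: each `v ∈ V` has copies `v(0), …, v(c-1)`,
while `s` and `t` are represented by their `0`-th copy only. -/
def copyValid [DecidableEq α] (s t : α) (c : ℕ) (a : α × ℕ) : Prop :=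
  if a.1 = s ∨ a.1 = t then a.2 = 0 else a.2 < c

/-- The discretized graph `G'`: vertices are copies `v(i)`; there is an edge
`(u(i), v(j))` iff `(u,v)` is an edge of `G` and `iα + jα < w (u,v)`
(copies of `s`, `t` count with power `0`). -/
def discGraph [DecidableEq α] (G : SimpleGraph α) (w : Sym2 α → ℝ) (s t : α) (al : ℝ)
    (c : ℕ) : SimpleGraph (α × ℕ) where
  Adj a b := copyValid s t c a ∧ copyValid s t c b ∧ G.Adj a.1 b.1 ∧
      copyPow s t al a + copyPow s t al b < w s(a.1, b.1)
  symm := by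
    constructor
    intro a b h
    refine ⟨h.2.1, h.1, h.2.2.1.symm, ?_⟩
    rw [Sym2.eq_swap]
    linarith [h.2.2.2]
  loopless := ⟨fun a h => G.irrefl h.2.2.1⟩

/-- A set of vertices of the discretized graph consisting only of valid copies of
vertices of `V` (i.e. copy-vertices, excluding `s` and `t`). -/
def AllowedCut (s t : α) (c : ℕ) (K : Set (α × ℕ)) : Prop :=
  ∀ a ∈ K, a.1 ≠ s ∧ a.1 ≠ t ∧ a.2 < c

/-- The power requirement of an edge: `w e / 2` if both endpoints are in `V`,
and `w e` if one endpoint is `s` or `t`. -/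
noncomputable def powReq [DecidableEq α] (s t : α) (w : Sym2 α → ℝ) (e : Sym2 α) : ℝ :=
  if s ∈ e ∨ t ∈ e then w e else w e / 2

lemma powReq_nonneg [DecidableEq α] (s t : α) (w : Sym2 α → ℝ) (hw : ∀ e, 0 ≤ w e)
    (e : Sym2 α) : 0 ≤ powReq s t w e := by
  unfold powReq; split <;> linarith [hw e]

lemma cutAdj [DecidableEq α] (G : SimpleGraph α) (w : Sym2 α → ℝ) (s t : α)
    (hadj : ¬ G.Adj s t) (q : ℝ) (u v : α) :
    (cutGraph G w (uniformP s t q)).Adj u v ↔ G.Adj u v ∧ q < powReq s t w s(u, v) := by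
  show (G.Adj u v ∧ _) ↔ _
  by_cases hu : u = s ∨ u = t <;> by_cases hv : v = s ∨ v = t
  · constructor <;> rintro ⟨h1, -⟩ <;> exfalso <;>
      rcases hu with rfl | rfl <;> rcases hv with rfl | rfl
    all_goals first
      | exact G.irrefl h1
      | exact hadj h1
      | exact hadj h1.symm
  · have hpr : powReq s t w s(u, v) = w s(u, v) := by
      unfold powReq
      rw [if_pos]
      rcases hu with rfl | rfl
      · exact Or.inl (Sym2.mem_mk_left u v)
      · exact Or.inr (Sym2.mem_mk_left u v)
    unfold uniformP
    rw [if_pos hu, if_neg hv, hpr]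
    constructor <;> rintro ⟨h1, h2⟩ <;> exact ⟨h1, by linarith⟩
  · have hpr : powReq s t w s(u, v) = w s(u, v) := by
      unfold powReq
      rw [if_pos]
      rcases hv with rfl | rfl
      · exact Or.inl (Sym2.mem_mk_right u v)
      · exact Or.inr (Sym2.mem_mk_right u v)
    unfold uniformP
    rw [if_neg hu, if_pos hv, hpr]
    constructor <;> rintro ⟨h1, h2⟩ <;> exact ⟨h1, by linarith⟩
  · have hpr : powReq s t w s(u, v) = w s(u, v) / 2 := by
      unfold powReq
      rw [if_neg]
      rw [Sym2.mem_iff, Sym2.mem_iff]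
      push_neg
      push_neg at hu hv
      exact ⟨⟨fun h => hu.1 h.symm, fun h => hv.1 h.symm⟩,
        fun h => hu.2 h.symm, fun h => hv.2 h.symm⟩
    unfold uniformP
    rw [if_neg hu, if_neg hv, hpr]
    constructor <;> rintro ⟨h1, h2⟩ <;> exact ⟨h1, by linarith⟩

/-- the optimal bottleneck power `p*` equals the power requirement of
some edge of `G`, hence lies in a set of at most `|E|` candidate values. -/
theorem bottleneck_is_power_requirement [Fintype α] [DecidableEq α]
    (G : SimpleGraph α) [DecidableRel G.Adj] (w : Sym2 α → ℝ) (s t : α) (hst : s ≠ t)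
    (hadj : ¬ G.Adj s t) (hw : ∀ e, 0 ≤ w e) (hconn : G.Reachable s t)
    (pstar : ℝ)
    (hps : IsLeast {q : ℝ | 0 ≤ q ∧ Feasible G w s t (uniformP s t q)} pstar) :
    pstar ∈ G.edgeFinset.image (powReq s t w) ∧
      (G.edgeFinset.image (powReq s t w)).card ≤ G.edgeFinset.card := by
  classical
  refine ⟨?_, Finset.card_image_le⟩
  obtain ⟨hmem0, hlb⟩ := hps
  obtain ⟨hp0, hfeas⟩ := hmem0
  by_contra hmem
  have hne : ∀ e ∈ G.edgeFinset, powReq s t w e ≠ pstar := by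
    intro e he h; exact hmem (Finset.mem_image.mpr ⟨e, he, h⟩)
  set T := G.edgeFinset.filter (fun e => powReq s t w e < pstar) with hT
  have hTne : T.Nonempty := by
    by_contra hTe
    rw [Finset.not_nonempty_iff_eq_empty] at hTe
    have hEq : cutGraph G w (uniformP s t pstar) = G := by
      ext u v
      rw [cutAdj G w s t hadj]
      constructor
      · exact fun h => h.1
      · intro h
        refine ⟨h, ?_⟩
        have he : s(u, v) ∈ G.edgeFinset := SimpleGraph.mem_edgeFinset.mpr h
        have h2 : ¬ powReq s t w s(u, v) < pstar := by
          intro hh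
          have : s(u, v) ∈ T := Finset.mem_filter.mpr ⟨he, hh⟩
          simp [hTe] at this
        exact lt_of_le_of_ne (not_lt.mp h2) (Ne.symm (hne _ he))
    exact hfeas.2.2.2 (by rw [hEq]; exact hconn)
  set q' := T.sup' hTne (powReq s t w) with hq'
  have hq'lt : q' < pstar := by
    rw [hq', Finset.sup'_lt_iff]
    intro e he
    exact (Finset.mem_filter.mp he).2
  obtain ⟨e0, he0, he0eq⟩ := Finset.exists_mem_eq_sup' hTne (powReq s t w)
  have hq'nn : 0 ≤ q' := by rw [hq', he0eq]; exact powReq_nonneg s t w hw e0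
  have hEq : cutGraph G w (uniformP s t q') = cutGraph G w (uniformP s t pstar) := by
    ext u v
    rw [cutAdj G w s t hadj, cutAdj G w s t hadj]
    refine and_congr_right fun h => ?_
    have he : s(u, v) ∈ G.edgeFinset := SimpleGraph.mem_edgeFinset.mpr h
    by_cases hc : powReq s t w s(u, v) < pstar
    · have hle : powReq s t w s(u, v) ≤ q' :=
        Finset.le_sup' _ (Finset.mem_filter.mpr ⟨he, hc⟩)
      simp [not_lt.mpr hle, not_lt.mpr (le_of_lt hc)]
    · have hgt : pstar < powReq s t w s(u, v) :=
        lt_of_le_of_ne (not_lt.mp hc) (Ne.symm (hne _ he))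
      simp [hgt, lt_trans hq'lt hgt]
  have hfeas' : Feasible G w s t (uniformP s t q') := by
    refine ⟨?_, ?_, ?_, ?_⟩
    · simp [uniformP]
    · simp [uniformP]
    · intro v
      unfold uniformP
      split
      · exact le_refl 0
      · exact hq'nn
    · rw [hEq]; exact hfeas.2.2.2
  exact absurd (hlb ⟨hq'nn, hfeas'⟩) (not_le.mpr hq'lt)
end

section
/- In the discretized graph G′, there exists a minimum s-t vertex cut K* such that for every vertex v ∈ V the copies of v contained in K* form a prefix v(0), v(1), …, v(k−1) of the copy sequence for some k ≥ 0. -/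
open Finset

variable {α : Type*}

private lemma not_reachable_of_no_adj {β : Type*} {H : SimpleGraph β} {x y : β} (hxy : x ≠ y)
    (h : ∀ b, ¬ H.Adj x b) : ¬ H.Reachable x y := by
  rintro ⟨p⟩
  cases p with
  | nil => exact hxy rfl
  | cons ha q => exact h _ ha

/-- the discretized graph `G'` has a minimum `s`-`t` vertex cut (among
cuts consisting of copy-vertices) in which the copies of each vertex form a prefix
`v(0), v(1), …, v(k-1)` of the copy sequence. -/
theorem prefix_min_cut_exists [Fintype α] [DecidableEq α]
    (G : SimpleGraph α) (w : Sym2 α → ℝ) (s t : α) (hst : s ≠ t)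
    (hadj : ¬ G.Adj s t) (al : ℝ) (hal : 0 < al) (c : ℕ) :
    ∃ K : Set (α × ℕ), AllowedCut s t c K ∧
      IsCut (discGraph G w s t al c) (s, 0) (t, 0) K ∧
      (∀ K', AllowedCut s t c K' →
        IsCut (discGraph G w s t al c) (s, 0) (t, 0) K' → K.ncard ≤ K'.ncard) ∧
      (∀ v i j, (v, j) ∈ K → i < j → (v, i) ∈ K) := by
  classical
  set H := discGraph G w s t al c with hH
  have hstne : ((s, 0) : α × ℕ) ≠ (t, 0) := fun h => hst (congrArg Prod.fst h)
  -- the full cut is an allowed cut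
  have hfullA : AllowedCut s t c {a : α × ℕ | a.1 ≠ s ∧ a.1 ≠ t ∧ a.2 < c} := fun a ha => ha
  have hfullC : IsCut H (s, 0) (t, 0) {a : α × ℕ | a.1 ≠ s ∧ a.1 ≠ t ∧ a.2 < c} := by
    refine ⟨by simp, by simp [hst.symm], ?_⟩
    refine not_reachable_of_no_adj hstne ?_
    rintro b ⟨⟨hva, hvb, hG, hw⟩, haK, hbK⟩
    simp only [Set.mem_setOf_eq, not_and, not_lt] at hbK
    by_cases hb : b.1 = s ∨ b.1 = t
    · rcases hb with hb | hb
      · exact G.irrefl (by rwa [hb] at hG)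
      · exact hadj (by rwa [hb] at hG)
    · push_neg at hb
      have hlt : b.2 < c := by simpa [copyValid, hb.1, hb.2] using hvb
      exact absurd hlt (not_lt.2 (hbK hb.1 hb.2))
  have hex : ∃ n : ℕ, ∃ K : Set (α × ℕ), AllowedCut s t c K ∧ IsCut H (s, 0) (t, 0) K ∧
      K.ncard = n := ⟨_, _, hfullA, hfullC, rfl⟩
  obtain ⟨K0, hA0, hC0, hn0⟩ := Nat.find_spec hex
  have hmin : ∀ K', AllowedCut s t c K' → IsCut H (s, 0) (t, 0) K' →
      Nat.find hex ≤ K'.ncard := fun K' h1 h2 => Nat.find_min' hex ⟨K', h1, h2, rfl⟩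
  have hK0fin : K0.Finite := by
    apply Set.Finite.subset (Set.finite_univ.prod (Set.finite_Iio c))
    intro a ha
    exact Set.mem_prod.2 ⟨Set.mem_univ _, (hA0 a ha).2.2⟩
  set F0 := hK0fin.toFinset with hF0
  have hmemF0 : ∀ a, a ∈ F0 ↔ a ∈ K0 := fun a => hK0fin.mem_toFinset
  set n' : α → ℕ := fun v => (F0.filter fun a => a.1 = v).card with hn'
  have hn'le : ∀ v, n' v ≤ c := by
    intro v
    calc n' v ≤ (Finset.range c).card := by
          apply Finset.card_le_card_of_injOn (fun a => a.2)
          · intro a ha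
            simp only [Finset.mem_coe, Finset.mem_filter] at ha
            exact Finset.mem_range.2 ((hA0 a ((hmemF0 a).1 ha.1)).2.2)
          · intro a ha b hb hab
            simp only [Finset.coe_filter, Set.mem_setOf_eq] at ha hb
            exact Prod.ext (ha.2.trans hb.2.symm) hab
      _ = c := Finset.card_range c
  have hn's : n' s = 0 := Finset.card_eq_zero.2 (Finset.filter_eq_empty_iff.2
    (fun a ha => (hA0 a ((hmemF0 a).1 ha)).1))
  have hn't : n' t = 0 := Finset.card_eq_zero.2 (Finset.filter_eq_empty_iff.2
    (fun a ha => (hA0 a ((hmemF0 a).1 ha)).2.1))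
  set KsF : Finset (α × ℕ) :=
    Finset.univ.biUnion (fun v => (Finset.range (n' v)).image fun i => (v, i)) with hKsF
  have hmemKs : ∀ a : α × ℕ, a ∈ KsF ↔ a.2 < n' a.1 := by
    intro a
    rw [hKsF]
    simp only [Finset.mem_biUnion, Finset.mem_univ, true_and, Finset.mem_image,
      Finset.mem_range]
    constructor
    · rintro ⟨v, i, hi, rfl⟩
      exact hi
    · intro h
      exact ⟨a.1, a.2, h, rfl⟩
  set Ks : Set (α × ℕ) := ↑KsF with hKs
  have hmemKs' : ∀ a : α × ℕ, a ∈ Ks ↔ a.2 < n' a.1 := by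
    intro a
    rw [hKs, Finset.mem_coe]
    exact hmemKs a
  have hAKs : AllowedCut s t c Ks := by
    intro a ha
    have h2 := (hmemKs' a).1 ha
    have h1 : a.1 ≠ s := by
      intro h
      rw [h, hn's] at h2
      exact Nat.not_lt_zero _ h2
    have h1' : a.1 ≠ t := by
      intro h
      rw [h, hn't] at h2
      exact Nat.not_lt_zero _ h2
    exact ⟨h1, h1', lt_of_lt_of_le h2 (hn'le a.1)⟩
  have hsK : ((s, 0) : α × ℕ) ∉ Ks := by
    intro h
    have := (hmemKs' _).1 h
    rw [hn's] at this
    exact Nat.not_lt_zero _ this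
  have htK : ((t, 0) : α × ℕ) ∉ Ks := by
    intro h
    have := (hmemKs' _).1 h
    rw [hn't] at this
    exact Nat.not_lt_zero _ this
  -- cardinality of Ks equals that of K0
  have hcard : Ks.ncard = K0.ncard := by
    rw [hKs, Set.ncard_coe_finset, Set.ncard_eq_toFinset_card K0 hK0fin, ← hF0]
    have h1 : F0.card = ∑ v : α, n' v :=
      Finset.card_eq_sum_card_fiberwise (f := Prod.fst) (fun x _ => Finset.mem_univ x.1)
    have h2 : KsF.card = ∑ v : α, n' v := by
      rw [hKsF, Finset.card_biUnion]
      · apply Finset.sum_congr rfl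
        intro v _
        rw [Finset.card_image_of_injective _ (fun i j h => congrArg Prod.snd h),
          Finset.card_range]
      · intro x _ y _ hxy
        simp only [Finset.disjoint_left, Finset.mem_image, Finset.mem_range]
        rintro a ⟨i, hi, rfl⟩ ⟨j, hj, hEq⟩
        exact hxy (congrArg Prod.fst hEq).symm
    rw [h1, h2]
  -- the replacement map
  set f : α × ℕ → α × ℕ :=
    fun a => if a.1 = s ∨ a.1 = t then a else (a.1, sInf {j | (a.1, j) ∉ K0}) with hf
  have hfs : f (s, 0) = (s, 0) := by simp [hf]
  have hft : f (t, 0) = (t, 0) := by simp [hf]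
  have key : ∀ a : α × ℕ, copyValid s t c a → a ∉ Ks →
      f a ∉ K0 ∧ copyValid s t c (f a) ∧ copyPow s t al (f a) ≤ copyPow s t al a ∧
      (f a).1 = a.1 := by
    intro a hval haK
    by_cases h : a.1 = s ∨ a.1 = t
    · have hfa : f a = a := by simp [hf, h]
      rw [hfa]
      refine ⟨fun hmem => ?_, hval, le_refl _, rfl⟩
      rcases h with h | h
      · exact (hA0 a hmem).1 h
      · exact (hA0 a hmem).2.1 h
    · have hfa : f a = (a.1, sInf {j | (a.1, j) ∉ K0}) := by simp [hf, h]
      have hvc : a.2 < c := by simpa [copyValid, h] using hval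
      have hKle : n' a.1 ≤ a.2 := not_lt.1 (fun hlt => haK ((hmemKs' a).2 hlt))
      have hcmem : c ∈ {j | (a.1, j) ∉ K0} := fun hmem => lt_irrefl c (hA0 _ hmem).2.2
      have hmmem : (a.1, sInf {j | (a.1, j) ∉ K0}) ∉ K0 := Nat.sInf_mem ⟨c, hcmem⟩
      have hmle : sInf {j | (a.1, j) ∉ K0} ≤ n' a.1 := by
        have hle : (Finset.range (sInf {j | (a.1, j) ∉ K0})).card ≤
            (F0.filter fun b => b.1 = a.1).card := by
          apply Finset.card_le_card_of_injOn (fun i => (a.1, i))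
          · intro i hi
            rw [Finset.mem_coe, Finset.mem_filter]
            refine ⟨(hmemF0 _).2 ?_, rfl⟩
            by_contra hnot
            exact Nat.notMem_of_lt_sInf (Finset.mem_range.1 hi) hnot
          · intro i _ j _ hij
            exact congrArg Prod.snd hij
        simpa using hle
      have hmlt : sInf {j | (a.1, j) ∉ K0} ≤ a.2 := hmle.trans hKle
      rw [hfa]
      refine ⟨hmmem, ?_, ?_, rfl⟩
      · simpa [copyValid, h] using lt_of_le_of_lt hmlt hvc
      · simp only [copyPow, h, if_false]
        exact mul_le_mul_of_nonneg_right (Nat.cast_le.2 hmlt) hal.le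
  have hom : ∀ a b, (delV H Ks).Adj a b → (delV H K0).Adj (f a) (f b) := by
    rintro a b ⟨⟨hva, hvb, hG, hw⟩, haK, hbK⟩
    obtain ⟨ha1, ha2, ha3, ha4⟩ := key a hva haK
    obtain ⟨hb1, hb2, hb3, hb4⟩ := key b hvb hbK
    refine ⟨⟨ha2, hb2, ?_, ?_⟩, ha1, hb1⟩
    · rw [ha4, hb4]
      exact hG
    · rw [ha4, hb4]
      calc copyPow s t al (f a) + copyPow s t al (f b)
          ≤ copyPow s t al a + copyPow s t al b := add_le_add ha3 hb3
        _ < w s(a.1, b.1) := hw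
  have hCKs : IsCut H (s, 0) (t, 0) Ks := by
    refine ⟨hsK, htK, fun hr => hC0.2.2 ?_⟩
    have hmap := SimpleGraph.Reachable.map
      (⟨f, fun {a b} h => hom a b h⟩ : delV H Ks →g delV H K0) hr
    have hmap' : (delV H K0).Reachable (f (s, 0)) (f (t, 0)) := hmap
    rw [hfs, hft] at hmap'
    exact hmap' 
  refine ⟨Ks, hAKs, hCKs, ?_, ?_⟩
  · intro K' h1 h2
    calc Ks.ncard = K0.ncard := hcard
      _ = Nat.find hex := hn0
      _ ≤ K'.ncard := hmin K' h1 h2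
  · intro v i j hj hij
    exact (hmemKs' _).2 (lt_trans hij ((hmemKs' _).1 hj))
end

section
/- The optimal value Z of discrete MSPEC (where each vertex's power must equal either 0 or the weight of one of its incident edges) satisfies OPT ≤ Z ≤ 2·OPT, where OPT is the optimal value of (unrestricted) MSPEC. -/
open Finset

variable {α : Type*}

/-- Discrete MSPEC feasibility: a feasible MSPEC assignment where each vertex's power
is `0` or the weight of one of its incident edges. -/
def DiscFeasible (G : SimpleGraph α) (w : Sym2 α → ℝ) (s t : α) (p : α → ℝ) : Prop :=
  Feasible G w s t p ∧ ∀ v, p v = 0 ∨ ∃ u, G.Adj v u ∧ p v = w s(v, u)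

/-- the optimal value `Z` of discrete MSPEC satisfies
`OPT ≤ Z ≤ 2·OPT`. -/
theorem discrete_two_approx [Fintype α]
    (G : SimpleGraph α) (w : Sym2 α → ℝ) (s t : α) (hw : ∀ e, 0 ≤ w e)
    (OPT Z : ℝ)
    (hOPT : IsLeast {c : ℝ | ∃ p, Feasible G w s t p ∧ ∑ v, p v = c} OPT)
    (hZ : IsLeast {c : ℝ | ∃ p, DiscFeasible G w s t p ∧ ∑ v, p v = c} Z) :
    OPT ≤ Z ∧ Z ≤ 2 * OPT := by
  classical
  obtain ⟨⟨p0, hp0, hp0s⟩, hZlb⟩ := hZ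
  obtain ⟨⟨pO, hpO, hpOs⟩, hOlb⟩ := hOPT
  constructor
  · exact hOlb ⟨p0, hp0.1, hp0s⟩
  · -- construct a discrete feasible q from pO with q ≤ 2 pO pointwise
    set P : α → α → Prop :=
      fun v u => G.Adj v u ∧ w s(v, u) ≤ pO v + pO u ∧ pO u ≤ pO v with hP
    set T : α → Finset ℝ :=
      fun v => insert (0 : ℝ)
        ((Finset.univ.filter (P v)).image (fun u => w s(v, u))) with hT
    set q : α → ℝ := fun v => (T v).max' ⟨0, Finset.mem_insert_self _ _⟩ with hq
    have hqmem : ∀ v, q v ∈ T v := fun v => Finset.max'_mem _ _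
    have hqle : ∀ v, ∀ x ∈ T v, x ≤ q v := fun v => Finset.le_max' _
    have hq0 : ∀ v, 0 ≤ q v := fun v => hqle v 0 (Finset.mem_insert_self _ _)
    have hqform : ∀ v, q v = 0 ∨ ∃ u, P v u ∧ q v = w s(v, u) := by
      intro v
      rcases Finset.mem_insert.1 (hqmem v) with h | h
      · exact Or.inl h
      · obtain ⟨u, hu, he⟩ := Finset.mem_image.1 h
        exact Or.inr ⟨u, (Finset.mem_filter.1 hu).2, he.symm⟩
    have hq2p : ∀ v, q v ≤ 2 * pO v := by
      intro v
      rcases hqform v with h | ⟨u, ⟨_, h1, h2⟩, he⟩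
      · have := hpO.2.2.1 v; rw [h]; linarith
      · rw [he]; linarith
    have hzeroat : ∀ v, pO v = 0 → q v = 0 := by
      intro v hv
      rcases hqform v with h | ⟨u, ⟨_, h1, h2⟩, he⟩
      · exact h
      · have hpu : pO u = 0 := le_antisymm (hv ▸ h2) (hpO.2.2.1 u)
        have := hw s(v, u)
        rw [he, hv, hpu] at *
        linarith
    have hmono : cutGraph G w q ≤ cutGraph G w pO := by
      intro u v h
      refine ⟨h.1, ?_⟩
      by_contra hc
      push_neg at hc
      have h2 := h.2
      rcases le_total (pO u) (pO v) with hle | hle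
      · have hmem : w s(v, u) ∈ T v := by
          refine Finset.mem_insert_of_mem (Finset.mem_image_of_mem _
            (Finset.mem_filter.2 ⟨Finset.mem_univ u, h.1.symm, ?_, hle⟩))
          rw [Sym2.eq_swap]; linarith
        have h3 : w s(v, u) ≤ q v := hqle v _ hmem
        rw [Sym2.eq_swap] at h3
        have := hq0 u
        linarith
      · have hmem : w s(u, v) ∈ T u := by
          refine Finset.mem_insert_of_mem (Finset.mem_image_of_mem _
            (Finset.mem_filter.2 ⟨Finset.mem_univ v, h.1, ?_, hle⟩))
          linarith
        have h3 : w s(u, v) ≤ q u := hqle u _ hmem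
        have := hq0 v
        linarith
    have hfeas : Feasible G w s t q :=
      ⟨hzeroat s hpO.1, hzeroat t hpO.2.1, hq0,
        fun hr => hpO.2.2.2 (hr.mono hmono)⟩
    have hdisc : DiscFeasible G w s t q := by
      refine ⟨hfeas, fun v => (hqform v).imp id ?_⟩
      rintro ⟨u, hu, he⟩
      exact ⟨u, hu.1, he⟩
    have hZq : Z ≤ ∑ v, q v := hZlb ⟨q, hdisc, rfl⟩
    have hsum : ∑ v, q v ≤ 2 * OPT := by
      rw [← hpOs, Finset.mul_sum]
      exact Finset.sum_le_sum fun v _ => hq2p v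
    linarith
end

section
/- In MSPEC with integer edge weights bounded by W, every power value in some optimal solution is an integer between 0 and W; hence the problem reduces exactly to a minimum s-t vertex cut in the discretized graph with W+1 copies of each vertex and step α = 1. -/
open Finset

variable {α : Type*}

lemma cutGraph_adj {G : SimpleGraph α} {w : Sym2 α → ℝ} {p : α → ℝ} {u v : α} :
    (cutGraph G w p).Adj u v ↔ G.Adj u v ∧ p u + p v < w s(u, v) := Iff.rfl

lemma delV_adj {H : SimpleGraph α} {K : Set α} {u v : α} :
    (delV H K).Adj u v ↔ H.Adj u v ∧ u ∉ K ∧ v ∉ K := Iff.rfl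

lemma discGraph_adj [DecidableEq α] {G : SimpleGraph α} {w : Sym2 α → ℝ} {s t : α} {al : ℝ}
    {c : ℕ} {a b : α × ℕ} :
    (discGraph G w s t al c).Adj a b ↔ copyValid s t c a ∧ copyValid s t c b ∧ G.Adj a.1 b.1 ∧
      copyPow s t al a + copyPow s t al b < w s(a.1, b.1) := Iff.rfl

lemma delV_le {α : Type*} (H : SimpleGraph α) (K : Set α) : delV H K ≤ H := by
  intro u v h
  exact (delV_adj.1 h).1

lemma clamp_sum (x : ℝ) (n : ℕ) :
    ∑ i ∈ Finset.range n, max 0 (min (x - i) 1) = max 0 (min x n) := by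
  induction n with
  | zero => simp
  | succ n ih =>
    rw [Finset.sum_range_succ, ih]
    push_cast
    rcases le_total x (n : ℝ) with h | h <;> rcases le_total x 0 with h0 | h0 <;>
      rcases le_total x ((n : ℝ) + 1) with h1 | h1 <;>
      simp only [min_def, max_def] <;> split_ifs <;> linarith

open Classical MeasureTheory in
theorem power_to_cut [Fintype α] [DecidableEq α]
    (G : SimpleGraph α) (w : Sym2 α → ℕ) (W : ℕ) (hw : ∀ e, w e ≤ W)
    (s t : α) (hst : s ≠ t)
    (p : α → ℝ) (hp : Feasible G (fun e => (w e : ℝ)) s t p) :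
    ∃ K : Set (α × ℕ), AllowedCut s t (W + 1) K ∧
      IsCut (discGraph G (fun e => (w e : ℝ)) s t 1 (W + 1)) (s, 0) (t, 0) K ∧
      (K.ncard : ℝ) ≤ ∑ v, p v := by
  obtain ⟨hps, hpt, hpnn, hnr⟩ := hp
  set G' := discGraph G (fun e => (w e : ℝ)) s t 1 (W + 1) with hG'
  have hpsum : (0:ℝ) ≤ ∑ v, p v := Finset.sum_nonneg fun v _ => hpnn v
  by_cases hreach : G'.Reachable (s, 0) (t, 0)
  case neg =>
    refine ⟨∅, by simp [AllowedCut], ⟨Set.notMem_empty _, Set.notMem_empty _, ?_⟩,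
      by simpa using hpsum⟩
    intro h
    exact hreach (h.mono (delV_le _ _))
  case pos =>
  set y : α × ℕ → ℝ := fun a => if a.1 = s ∨ a.1 = t then 0 else max 0 (min (p a.1 - a.2) 1)
    with hy
  have hy0 : ∀ a, 0 ≤ y a := by
    intro a; simp only [hy]; split
    · exact le_refl 0
    · exact le_max_left _ _
  have hyb : ∀ a : α × ℕ, y a < 1 → p a.1 ≤ copyPow s t 1 a + y a := by
    intro a hya
    by_cases h : a.1 = s ∨ a.1 = t
    · simp only [hy, if_pos h, copyPow] at hya ⊢
      rcases h with h | h <;> rw [h]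
      · rw [hps]; simp
      · rw [hpt]; simp
    · simp only [hy, if_neg h, copyPow] at hya ⊢
      rcases le_total (p a.1 - a.2) 1 with h1 | h1
      · have h2 : p a.1 - a.2 ≤ max 0 (min (p a.1 - a.2) 1) := by
          rw [min_eq_left h1]; exact le_max_right _ _
        rw [mul_one]
        linarith
      · exfalso
        rw [min_eq_right h1] at hya
        have : (1:ℝ) ≤ max 0 1 := le_max_right _ _
        linarith
  -- copyPow is a natural number cast
  have hcpn : ∀ a : α × ℕ, copyPow s t 1 a
      = (((if a.1 = s ∨ a.1 = t then 0 else a.2 : ℕ)) : ℝ) := by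
    intro a
    simp only [copyPow]
    split <;> simp
  -- Claim A : cheap walks in G' yield reachability in the cut graph
  have claimA : ∀ (x b : α × ℕ) (wk : G'.Walk x b),
      (wk.support.map y).sum < 1 →
      (cutGraph G (fun e => (w e : ℝ)) p).Reachable x.1 b.1 := by
    intro x b wk
    induction wk with
    | nil => exact fun _ => SimpleGraph.Reachable.refl _
    | @cons x z b hxz wk' ih =>
      intro hsum
      rw [SimpleGraph.Walk.support_cons, List.map_cons, List.sum_cons] at hsum
      have hsupp : wk'.support = z :: wk'.support.tail := wk'.support_eq_cons
      have hrest : (wk'.support.map y).sum = y z + (wk'.support.tail.map y).sum := by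
        conv_lhs => rw [hsupp]
        rw [List.map_cons, List.sum_cons]
      have htail0 : 0 ≤ (wk'.support.tail.map y).sum := by
        apply List.sum_nonneg
        intro c hc
        obtain ⟨a, _, rfl⟩ := List.mem_map.1 hc
        exact hy0 a
      have hyx : y x < 1 := by linarith [hrest, htail0, hy0 z]
      have hyz : y z < 1 := by linarith [hrest, htail0, hy0 x]
      have hsum' : y x + y z < 1 := by linarith [hrest, htail0]
      -- integrality gap
      have hcplt : copyPow s t 1 x + copyPow s t 1 z + 1 ≤ (w s(x.1, z.1) : ℝ) := by
        have h0 : copyPow s t 1 x + copyPow s t 1 z < (w s(x.1, z.1) : ℝ) := (discGraph_adj.1 hxz).2.2.2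
        rw [hcpn x, hcpn z] at h0 ⊢
        have : (if x.1 = s ∨ x.1 = t then 0 else x.2) + (if z.1 = s ∨ z.1 = t then 0 else z.2)
            < w s(x.1, z.1) := by exact_mod_cast h0
        have : (if x.1 = s ∨ x.1 = t then 0 else x.2) + (if z.1 = s ∨ z.1 = t then 0 else z.2)
            + 1 ≤ w s(x.1, z.1) := this
        exact_mod_cast this
      have hadj : (cutGraph G (fun e => (w e : ℝ)) p).Adj x.1 z.1 := by
        refine cutGraph_adj.2 ⟨(discGraph_adj.1 hxz).2.2.1, ?_⟩
        have h1 := hyb x hyx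
        have h2 := hyb z hyz
        linarith
      refine hadj.reachable.trans (ih ?_)
      linarith [hy0 x]
  -- the distance function
  set C : α × ℕ → Set ℝ :=
    fun x => {c | ∃ wk : G'.Walk (s, 0) x, (wk.support.map y).sum = c} with hC
  set D : α × ℕ → ℝ := fun x => sInf (C x) with hD
  have hnnwalk : ∀ (u v : α × ℕ) (wk : G'.Walk u v), 0 ≤ (wk.support.map y).sum := by
    intro u v wk
    apply List.sum_nonneg
    intro c hc
    obtain ⟨a, _, rfl⟩ := List.mem_map.1 hc
    exact hy0 a
  have hbdd : ∀ x, BddBelow (C x) := by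
    intro x
    exact ⟨0, by rintro c ⟨wk, rfl⟩; exact hnnwalk _ _ wk⟩
  have hDnonneg : ∀ x, 0 ≤ D x := by
    intro x
    apply Real.sInf_nonneg
    rintro c ⟨wk, rfl⟩
    exact hnnwalk _ _ wk
  have hDs : D (s, 0) = 0 := by
    refine le_antisymm ?_ (hDnonneg _)
    apply csInf_le (hbdd _)
    exact ⟨SimpleGraph.Walk.nil, by simp [hy]⟩
  have hDt : 1 ≤ D (t, 0) := by
    obtain ⟨wk0⟩ := hreach
    refine le_csInf ⟨_, wk0, rfl⟩ ?_
    rintro c ⟨wk, rfl⟩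
    by_contra hlt
    push_neg at hlt
    exact hnr (claimA (s, 0) (t, 0) wk hlt)
  have htri : ∀ x z, G'.Reachable (s, 0) x → G'.Adj x z → D z ≤ D x + y z := by
    intro x z hrx hxz
    have h1 : ∀ c ∈ C x, D z - y z ≤ c := by
      rintro c ⟨wk, rfl⟩
      have h2 : D z ≤ (wk.support.map y).sum + y z := by
        refine csInf_le (hbdd _) ⟨wk.concat hxz, ?_⟩
        rw [SimpleGraph.Walk.support_concat, List.map_append,
          List.sum_append]
        simp
      linarith
    have hne : (C x).Nonempty := by
      obtain ⟨wk⟩ := hrx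
      exact ⟨_, wk, rfl⟩
    have := le_csInf hne h1
    linarith
  -- the threshold cuts
  set KS : ℝ → Finset (α × ℕ) := fun θ =>
    ((Finset.univ : Finset α) ×ˢ Finset.range (W + 1)).filter
      (fun a => a.1 ≠ s ∧ a.1 ≠ t ∧ G'.Reachable (s, 0) a ∧ D a - y a ≤ θ ∧ θ < D a) with hKS
  have hallowed : ∀ θ, AllowedCut s t (W + 1) ↑(KS θ) := by
    intro θ a ha
    simp only [hKS, Finset.coe_filter, Set.mem_setOf_eq, Finset.mem_product,
      Finset.mem_range] at ha
    exact ⟨ha.2.1, ha.2.2.1, ha.1.2⟩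
  have hcut : ∀ θ : ℝ, 0 ≤ θ → θ < 1 → IsCut G' (s, 0) (t, 0) ↑(KS θ) := by
    intro θ hθ0 hθ1
    have hsK : (s, 0) ∉ (KS θ : Set (α × ℕ)) := by simp [hKS]
    have htK : (t, 0) ∉ (KS θ : Set (α × ℕ)) := by simp [hKS]
    refine ⟨hsK, htK, ?_⟩
    intro hr
    obtain ⟨wk⟩ := hr
    have inner : ∀ (x b : α × ℕ) (wk : (delV G' ↑(KS θ)).Walk x b),
        G'.Reachable (s, 0) x → D x ≤ θ → D b ≤ θ := by
      intro x b wk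
      induction wk with
      | nil => exact fun _ h => h
      | @cons x z b hxz wk' ih =>
        intro hrx hDx
        obtain ⟨hxz', hxK, hzK⟩ := delV_adj.1 hxz
        have hrz : G'.Reachable (s, 0) z := hrx.trans hxz'.reachable
        by_cases hDz : D z ≤ θ
        · exact ih hrz hDz
        · exfalso
          push_neg at hDz
          have hcvz : copyValid s t (W + 1) z := (discGraph_adj.1 hxz').2.1
          have hz_ne_s : z.1 ≠ s := by
            intro h
            have hz2 : z.2 = 0 := by simpa [copyValid, h] using hcvz
            have hz' : z = (s, 0) := Prod.ext h hz2
            rw [hz', hDs] at hDz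
            linarith
          have hz_ne_t : z.1 ≠ t := by
            intro h
            have hz2 : z.2 = 0 := by simpa [copyValid, h] using hcvz
            have hyz : y z = 0 := by simp [hy, h]
            have h3 := htri x z hrx hxz'
            rw [hyz] at h3
            have hzt : z = (t, 0) := Prod.ext h hz2
            rw [hzt] at h3
            linarith
          have hz2 : z.2 < W + 1 := by simpa [copyValid, hz_ne_s, hz_ne_t] using hcvz
          apply hzK
          have h3 := htri x z hrx hxz'
          have h4 : D z - y z ≤ θ := by linarith
          simp only [hKS, Finset.coe_filter, Set.mem_setOf_eq, Finset.mem_product,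
            Finset.mem_range, Finset.mem_univ, true_and]
          exact ⟨hz2, hz_ne_s, hz_ne_t, hrz, h4, hDz⟩
    have hfin := inner (s, 0) (t, 0) wk (SimpleGraph.Reachable.refl _)
      (by rw [hDs]; exact hθ0)
    linarith
  -- averaging
  have key : ∃ θ : ℝ, 0 ≤ θ ∧ θ < 1 ∧ ((KS θ).card : ℝ) ≤ ∑ v, p v := by
    by_contra hcon
    push_neg at hcon
    set f : (α × ℕ) → ℝ → ℝ := fun a θ =>
      if a.1 ≠ s ∧ a.1 ≠ t ∧ G'.Reachable (s, 0) a then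
        (Set.Ico (D a - y a) (D a)).indicator (fun _ => (1:ℝ)) θ else 0 with hf
    set S : Finset (α × ℕ) := (Finset.univ : Finset α) ×ˢ Finset.range (W + 1) with hS
    have hgcard : ∀ θ : ℝ, ((KS θ).card : ℝ) = ∑ a ∈ S, f a θ := by
      intro θ
      rw [hKS]
      rw [Finset.card_filter]
      push_cast
      apply Finset.sum_congr rfl
      intro a _
      by_cases h1 : a.1 ≠ s ∧ a.1 ≠ t ∧ G'.Reachable (s, 0) a
      · by_cases h2 : D a - y a ≤ θ ∧ θ < D a
        · rw [if_pos ⟨h1.1, h1.2.1, h1.2.2, h2.1, h2.2⟩]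
          simp only [hf, if_pos h1, Set.indicator_apply, Set.mem_Ico]
          rw [if_pos h2]
        · rw [if_neg (by tauto)]
          simp only [hf, if_pos h1, Set.indicator_apply, Set.mem_Ico]
          rw [if_neg h2]
      · rw [if_neg (by tauto)]
        simp [hf, h1]
    have hint : ∀ a : α × ℕ, Integrable (f a) := by
      intro a
      by_cases h : a.1 ≠ s ∧ a.1 ≠ t ∧ G'.Reachable (s, 0) a
      · have : f a = (Set.Ico (D a - y a) (D a)).indicator (fun _ => (1:ℝ)) :=
          funext fun θ => if_pos h
        rw [this]
        rw [integrable_indicator_iff measurableSet_Ico]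
        exact integrableOn_const (by rw [Real.volume_Ico]; exact ENNReal.ofReal_ne_top) (by simp)
      · have : f a = fun _ => (0:ℝ) := funext fun θ => if_neg h
        rw [this]
        exact integrable_zero _ _ _
    have hf0 : ∀ a θ, 0 ≤ f a θ := by
      intro a θ
      simp only [hf]
      split
      · exact Set.indicator_nonneg (fun _ _ => zero_le_one) _
      · exact le_refl 0
    have hintval : ∀ a : α × ℕ, (∫ θ, f a θ) ≤ y a := by
      intro a
      by_cases h : a.1 ≠ s ∧ a.1 ≠ t ∧ G'.Reachable (s, 0) a
      · have heq : f a = (Set.Ico (D a - y a) (D a)).indicator (fun _ => (1:ℝ)) :=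
          funext fun θ => if_pos h
        rw [heq, integral_indicator measurableSet_Ico, setIntegral_const, Real.volume_real_Ico,
          smul_eq_mul, mul_one]
        have : D a - (D a - y a) = y a := by ring
        rw [this, max_eq_left (hy0 a)]
      · have heq : f a = fun _ => (0:ℝ) := funext fun θ => if_neg h
        rw [heq]
        simpa using hy0 a
    have hsumy : ∑ a ∈ S, y a ≤ ∑ v, p v := by
      rw [hS, Finset.sum_product]
      apply Finset.sum_le_sum
      intro v _
      by_cases hv : v = s ∨ v = t
      · have : ∀ i ∈ Finset.range (W + 1), y (v, i) = 0 := by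
          intro i _
          simp [hy, hv]
        rw [Finset.sum_congr rfl this]
        simp
        exact hpnn v
      · have : ∀ i ∈ Finset.range (W + 1), y (v, i) = max 0 (min (p v - i) 1) := by
          intro i _
          simp only [hy, if_neg hv]
        rw [Finset.sum_congr rfl this, clamp_sum]
        rcases le_total (p v) ((W : ℝ) + 1) with h | h
        · rw [min_eq_left (by push_cast; linarith)]
          exact max_le (hpnn v) (le_refl _)
        · rw [min_eq_right (by push_cast; linarith)]
          refine max_le (hpnn v) ?_
          push_cast
          linarith
    set M : ℝ := ((⌊∑ v, p v⌋₊ + 1 : ℕ) : ℝ) with hM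
    have hMgt : ∑ v, p v < M := by
      rw [hM]
      push_cast
      exact Nat.lt_floor_add_one _
    have hcard : ∀ θ : ℝ, 0 ≤ θ → θ < 1 → M ≤ ((KS θ).card : ℝ) := by
      intro θ h0 h1
      have h2 := hcon θ h0 h1
      have h3 : ⌊∑ v, p v⌋₊ < (KS θ).card := (Nat.floor_lt hpsum).2 h2
      rw [hM]
      exact_mod_cast h3
    set g : ℝ → ℝ := fun θ => ∑ a ∈ S, f a θ with hg
    have hg_int : Integrable g := integrable_finset_sum _ (fun a _ => hint a)
    have hg0 : ∀ θ, 0 ≤ g θ := fun θ => Finset.sum_nonneg fun a _ => hf0 a θ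
    have h1 : M ≤ ∫ θ in Set.Ico (0:ℝ) 1, g θ := by
      have hmono : (∫ θ in Set.Ico (0:ℝ) 1, M) ≤ ∫ θ in Set.Ico (0:ℝ) 1, g θ := by
        apply setIntegral_mono_on
        · exact integrableOn_const (by rw [Real.volume_Ico]; exact ENNReal.ofReal_ne_top) (by simp)
        · exact hg_int.integrableOn
        · exact measurableSet_Ico
        · intro θ hθ
          have h5 := hcard θ hθ.1 hθ.2
          rw [hgcard θ] at h5
          exact h5
      have hconst : (∫ _ in Set.Ico (0:ℝ) 1, M) = M := by
        rw [setIntegral_const, Real.volume_real_Ico, sub_zero, max_eq_left zero_le_one,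
          one_smul]
      linarith [hconst ▸ hmono]
    have h2 : (∫ θ in Set.Ico (0:ℝ) 1, g θ) ≤ ∫ θ, g θ :=
      setIntegral_le_integral hg_int (Filter.Eventually.of_forall hg0)
    have h3 : (∫ θ, g θ) = ∑ a ∈ S, ∫ θ, f a θ :=
      integral_finset_sum S (fun a _ => hint a)
    have h4 : ∑ a ∈ S, (∫ θ, f a θ) ≤ ∑ a ∈ S, y a :=
      Finset.sum_le_sum fun a _ => hintval a
    linarith
  obtain ⟨θ, hθ0, hθ1, hcardle⟩ := key
  refine ⟨↑(KS θ), hallowed θ, hcut θ hθ0 hθ1, ?_⟩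
  rw [Set.ncard_coe_finset]
  exact hcardle

open Classical in
theorem cut_to_power [Fintype α] [DecidableEq α]
    (G : SimpleGraph α) (w : Sym2 α → ℕ) (W : ℕ) (hw : ∀ e, w e ≤ W)
    (s t : α)
    (K : Set (α × ℕ)) (hA : AllowedCut s t (W + 1) K)
    (hC : IsCut (discGraph G (fun e => (w e : ℝ)) s t 1 (W + 1)) (s, 0) (t, 0) K) :
    ∃ q : α → ℝ, Feasible G (fun e => (w e : ℝ)) s t q ∧
      (∀ v, ∃ z : ℕ, z ≤ W ∧ q v = z) ∧ ∑ v, q v ≤ (K.ncard : ℝ) := by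
  have hex : ∀ v : α, ∃ i, (v, i) ∉ K := by
    intro v
    refine ⟨W + 1, fun h => ?_⟩
    have := (hA _ h).2.2
    omega
  set m : α → ℕ := fun v => Nat.find (hex v) with hm
  set qn : α → ℕ := fun v => if v = s ∨ v = t then 0 else min (m v) W with hqn
  set q : α → ℝ := fun v => (qn v : ℝ) with hq
  have hqnW : ∀ v, qn v ≤ W := by
    intro v; simp only [hqn]; split <;> omega
  have hq0 : ∀ v, (0:ℝ) ≤ q v := fun v => Nat.cast_nonneg _
  have hqs : q s = 0 := by simp [hq, hqn]
  have hqt : q t = 0 := by simp [hq, hqn]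
  -- copyPow of lifted vertex equals q
  have hcp : ∀ v, copyPow s t 1 (v, qn v) = q v := by
    intro v
    simp only [copyPow, hq, hqn]
    split <;> simp_all
  have hcv : ∀ v, copyValid s t (W + 1) (v, qn v) := by
    intro v
    simp only [copyValid, hqn]
    split <;> simp_all <;> omega
  -- not in K whenever qn v < W or qn v = 0 case for s,t
  have hnotK : ∀ v, qn v < W ∨ v = s ∨ v = t → (v, qn v) ∉ K := by
    intro v hv
    by_cases hst' : v = s ∨ v = t
    · intro hmem
      rcases hst' with rfl | rfl
      · exact (hA _ hmem).1 rfl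
      · exact (hA _ hmem).2.1 rfl
    · rcases hv with hv | hv
      · have hminlt : min (m v) W < W := by simpa [hqn, hst'] using hv
        have : qn v = m v := by
          simp only [hqn, if_neg hst']
          omega
        rw [this]
        exact Nat.find_spec (hex v)
      · exact absurd hv hst'
  -- the key reachability contradiction
  have key : ∀ (x y : α) (wk2 : (cutGraph G (fun e => (w e : ℝ)) q).Walk x y),
      (delV (discGraph G (fun e => (w e : ℝ)) s t 1 (W + 1)) K).Reachable (x, qn x) (y, qn y) := by
    intro x y wk2
    induction wk2 with
      | nil => exact SimpleGraph.Reachable.refl _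
      | @cons x z _ hxz _ ih =>
        have hGxz : G.Adj x z := (cutGraph_adj.1 hxz).1
        have hwlt : q x + q z < (w s(x, z) : ℝ) := (cutGraph_adj.1 hxz).2
        have hwW : (w s(x,z) : ℝ) ≤ (W : ℝ) := by exact_mod_cast hw _
        have hqxW : q x < W := by linarith [hq0 z]
        have hqzW : q z < W := by linarith [hq0 x]
        have hnx : (x, qn x) ∉ K := by
          by_cases hst' : x = s ∨ x = t
          · exact hnotK x (Or.inr hst')
          · refine hnotK x (Or.inl ?_)
            have hx' : (qn x : ℝ) < W := by simpa [hq] using hqxW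
            exact_mod_cast hx'
        have hnz : (z, qn z) ∉ K := by
          by_cases hst' : z = s ∨ z = t
          · exact hnotK z (Or.inr hst')
          · refine hnotK z (Or.inl ?_)
            have hz' : (qn z : ℝ) < W := by simpa [hq] using hqzW
            exact_mod_cast hz'
        have hadj : (delV (discGraph G (fun e => (w e : ℝ)) s t 1 (W + 1)) K).Adj
            (x, qn x) (z, qn z) := by
          refine delV_adj.2 ⟨discGraph_adj.2 ⟨hcv x, hcv z, hGxz, ?_⟩, hnx, hnz⟩
          rw [hcp x, hcp z]
          exact hwlt
        exact hadj.reachable.trans ih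
  have hreach : ¬ (cutGraph G (fun e => (w e : ℝ)) q).Reachable s t := by
    intro hr
    obtain ⟨wk⟩ := hr
    have h2 := key s t wk
    have hqns : qn s = 0 := by simp [hqn]
    have hqnt : qn t = 0 := by simp [hqn]
    rw [hqns, hqnt] at h2
    exact hC.2.2 h2
  -- sum bound
  have hKfin : K.Finite := by
    apply Set.Finite.subset (Finset.finite_toSet ((Finset.univ : Finset α) ×ˢ Finset.range (W+1)))
    intro a ha
    simp only [Finset.coe_product, Set.mem_prod, Finset.mem_coe, Finset.mem_univ,
      Finset.mem_range, true_and, Finset.coe_range, Set.mem_Iio]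
    exact (hA _ ha).2.2
  have hncard : K.ncard = hKfin.toFinset.card := Set.ncard_eq_toFinset_card K hKfin
  have hfib : ∀ v : α, qn v ≤ (hKfin.toFinset.filter (fun a => a.1 = v)).card := by
    intro v
    by_cases hst' : v = s ∨ v = t
    · simp [hqn, hst']
    · have h1 : qn v ≤ m v := by simp only [hqn, if_neg hst']; omega
      have h2 : (Finset.range (m v)).card ≤ (hKfin.toFinset.filter (fun a => a.1 = v)).card := by
        apply Finset.card_le_card_of_injOn (fun i => (v, i))
        · intro i hi
          simp only [Finset.mem_coe, Finset.mem_range] at hi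
          refine Finset.mem_filter.2 ⟨Set.Finite.mem_toFinset hKfin |>.2 ?_, rfl⟩
          exact not_not.1 (Nat.find_min (hex v) hi)
        · intro i _ j _ hij
          exact congrArg Prod.snd hij
      rw [Finset.card_range] at h2
      exact le_trans h1 h2
  have hsum : ∑ v, qn v ≤ K.ncard := by
    rw [hncard, Finset.card_eq_sum_card_fiberwise (f := Prod.fst)
      (t := (Finset.univ : Finset α)) (fun x _ => Finset.mem_univ _)]
    exact Finset.sum_le_sum (fun v _ => hfib v)
  refine ⟨q, ⟨hqs, hqt, hq0, hreach⟩, fun v => ⟨qn v, hqnW v, rfl⟩, ?_⟩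
  calc ∑ v, q v = ((∑ v, qn v : ℕ) : ℝ) := by push_cast [hq]; rfl
  _ ≤ (K.ncard : ℝ) := by exact_mod_cast hsum


/-- for integer edge weights bounded by `W`, MSPEC has an optimal
solution with all powers integers in `[0, W]`, and its optimal value equals the size
of a minimum `s`-`t` vertex cut in the discretized graph with `W+1` copies of each
vertex and step size `α = 1`. -/
theorem integral_weights_exact_cut [Fintype α] [DecidableEq α]
    (G : SimpleGraph α) (w : Sym2 α → ℕ) (W : ℕ) (hw : ∀ e, w e ≤ W)
    (s t : α) (hst : s ≠ t) (hadj : ¬ G.Adj s t)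
    (OPT : ℝ)
    (hOPT : IsLeast
      {c : ℝ | ∃ p, Feasible G (fun e => (w e : ℝ)) s t p ∧ ∑ v, p v = c} OPT) :
    (∃ p, Feasible G (fun e => (w e : ℝ)) s t p ∧ ∑ v, p v = OPT ∧
      ∀ v, ∃ z : ℕ, z ≤ W ∧ p v = z) ∧
    ∃ K : Set (α × ℕ), AllowedCut s t (W + 1) K ∧
      IsCut (discGraph G (fun e => (w e : ℝ)) s t 1 (W + 1)) (s, 0) (t, 0) K ∧
      (∀ K', AllowedCut s t (W + 1) K' →
        IsCut (discGraph G (fun e => (w e : ℝ)) s t 1 (W + 1)) (s, 0) (t, 0) K' →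
        K.ncard ≤ K'.ncard) ∧
      OPT = (K.ncard : ℝ) := by
  classical
  obtain ⟨⟨p₀, hp₀, hsum₀⟩, hlb⟩ := hOPT
  obtain ⟨K₀, hK₀A, hK₀C, hK₀n⟩ := power_to_cut G w W hw s t hst p₀ hp₀
  set SS : Set ℕ := {n | ∃ K : Set (α × ℕ), AllowedCut s t (W + 1) K ∧
    IsCut (discGraph G (fun e => (w e : ℝ)) s t 1 (W + 1)) (s, 0) (t, 0) K ∧ K.ncard = n}
    with hSS
  have hne : K₀.ncard ∈ SS := ⟨K₀, hK₀A, hK₀C, rfl⟩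
  obtain ⟨K₁, hK₁A, hK₁C, hK₁card⟩ := Nat.sInf_mem (Set.nonempty_of_mem hne)
  obtain ⟨q, hqF, hqInt, hqsum⟩ := cut_to_power G w W hw s t K₁ hK₁A hK₁C
  have h1 : OPT ≤ ∑ v, q v := hlb ⟨q, hqF, rfl⟩
  have h2 : sInf SS ≤ K₀.ncard := Nat.sInf_le hne
  have h3 : (K₁.ncard : ℝ) ≤ (K₀.ncard : ℝ) := by
    rw [hK₁card]; exact_mod_cast h2
  have h4 : (K₀.ncard : ℝ) ≤ OPT := by rw [← hsum₀]; exact hK₀n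
  have h5 : ∑ v, q v ≤ (K₁.ncard : ℝ) := hqsum
  have hqOPT : ∑ v, q v = OPT := le_antisymm (by linarith) h1
  have hKOPT : OPT = (K₁.ncard : ℝ) := le_antisymm (by linarith) (by linarith)
  refine ⟨⟨q, hqF, hqOPT, hqInt⟩, K₁, hK₁A, hK₁C, ?_, hKOPT⟩
  intro K' hA' hC'
  rw [hK₁card]
  exact Nat.sInf_le ⟨K', hA', hC', rfl⟩
end
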